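/- If P and Q are orthogonal projections in C^{n×n}, then P:Q = (1/2)P₀, where P₀ is the orthogonal projection onto R(P) ∩ R(Q). -/

import Mathlib

open scoped Matrix Matrix.Norms.L2Operator ComplexOrder

/-- `MPInv A B` means `B` is the Moore-Penrose inverse of `A`. -/
def MPInv {n : ℕ} (A B : Matrix (Fin n) (Fin n) ℂ) : Prop :=
  A * B * A = A ∧ B * A * B = B ∧ (A * B).IsHermitian ∧ (B * A).IsHermitian

private lemma mat_ext_of_mulVec {n : ℕ} {M N : Matrix (Fin n) (Fin n) ℂ}
    (h : ∀ v, M *ᵥ v = N *ᵥ v) : M = N := by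
  ext i j
  have := congr_fun (h (Pi.single j 1)) i
  simpa [Matrix.mulVec_single] using this

/-- Uniqueness of the Moore-Penrose inverse. -/
private lemma mpinv_unique {n : ℕ} {A B C : Matrix (Fin n) (Fin n) ℂ}
    (hB : MPInv A B) (hC : MPInv A C) : B = C := by
  obtain ⟨hB1, hB2, hB3, hB4⟩ := hB
  obtain ⟨hC1, hC2, hC3, hC4⟩ := hC
  have hAB : A * B = A * C := by
    calc A * B = (A * C) * (A * B) := by
          conv_lhs => rw [← hC1]
          simp only [Matrix.mul_assoc]
    _ = (A * C)ᴴ * (A * B)ᴴ := by rw [hC3.eq, hB3.eq]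
    _ = ((A * B) * (A * C))ᴴ := by
          simp only [Matrix.conjTranspose_mul, Matrix.mul_assoc]
    _ = ((A * B * A) * C)ᴴ := by simp only [Matrix.mul_assoc]
    _ = (A * C)ᴴ := by rw [hB1]
    _ = A * C := hC3.eq
  have hBA : B * A = C * A := by
    calc B * A = (B * A) * (C * A) := by
          conv_lhs => rw [← hC1]
          simp only [Matrix.mul_assoc]
    _ = (B * A)ᴴ * (C * A)ᴴ := by rw [hB4.eq, hC4.eq]
    _ = ((C * A) * (B * A))ᴴ := by
          simp only [Matrix.conjTranspose_mul, Matrix.mul_assoc]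
    _ = (C * (A * B * A))ᴴ := by simp only [Matrix.mul_assoc]
    _ = (C * A)ᴴ := by rw [hB1]
    _ = C * A := hC4.eq
  calc B = B * A * B := hB2.symm
  _ = C * (A * B) := by rw [hBA, Matrix.mul_assoc]
  _ = C * (A * C) := by rw [hAB]
  _ = C := by rw [← Matrix.mul_assoc, hC2]

/-- If `F` is an idempotent and the range of `A` is contained in the range of `F`,
then `F * A = A`. -/
private lemma herm_idem_mul_eq {n : ℕ} {F A : Matrix (Fin n) (Fin n) ℂ}
    (hF2 : F * F = F)
    (h : LinearMap.range A.mulVecLin ≤ LinearMap.range F.mulVecLin) : F * A = A := by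
  apply mat_ext_of_mulVec
  intro v
  obtain ⟨w, hw⟩ := h (LinearMap.mem_range_self A.mulVecLin v)
  simp only [Matrix.mulVecLin_apply] at hw
  rw [← Matrix.mulVec_mulVec, ← hw, Matrix.mulVec_mulVec, hF2]

/-- For orthogonal projections P and Q, P:Q = (1/2)P₀ where P₀ projects onto R(P) ∩ R(Q). -/
theorem parallel_sum_projections {n : ℕ} (P Q Sd P₀ : Matrix (Fin n) (Fin n) ℂ)
    (hP : P.IsHermitian) (hP2 : P * P = P)
    (hQ : Q.IsHermitian) (hQ2 : Q * Q = Q)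
    (hSd : MPInv (P + Q) Sd)
    (hP₀ : P₀.IsHermitian) (hP₀2 : P₀ * P₀ = P₀)
    (hP₀range : LinearMap.range P₀.mulVecLin
      = LinearMap.range P.mulVecLin ⊓ LinearMap.range Q.mulVecLin) :
    P * Sd * Q = (2 : ℂ)⁻¹ • P₀ := by
  set S := P + Q with hS
  obtain ⟨h1, h2, h3, h4⟩ := hSd
  have hSH : S.IsHermitian := hP.add hQ
  -- Sd is Hermitian, since Sdᴴ is also a Moore-Penrose inverse of S
  have hSdH : Sd.IsHermitian := by
    have hMP' : MPInv S Sdᴴ := by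
      refine ⟨?_, ?_, ?_, ?_⟩
      · have h := congrArg Matrix.conjTranspose h1
        simp only [Matrix.conjTranspose_mul, hSH.eq] at h
        calc S * Sdᴴ * S = S * (Sdᴴ * S) := by rw [Matrix.mul_assoc]
        _ = S := h
      · have h := congrArg Matrix.conjTranspose h2
        simp only [Matrix.conjTranspose_mul, hSH.eq] at h
        calc Sdᴴ * S * Sdᴴ = Sdᴴ * (S * Sdᴴ) := by rw [Matrix.mul_assoc]
        _ = Sdᴴ := h
      · show (S * Sdᴴ)ᴴ = S * Sdᴴ
        calc (S * Sdᴴ)ᴴ = Sd * Sᴴ := by simp [Matrix.conjTranspose_mul]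
        _ = Sd * S := by rw [hSH.eq]
        _ = (Sd * S)ᴴ := h4.eq.symm
        _ = Sᴴ * Sdᴴ := by simp [Matrix.conjTranspose_mul]
        _ = S * Sdᴴ := by rw [hSH.eq]
      · show (Sdᴴ * S)ᴴ = Sdᴴ * S
        calc (Sdᴴ * S)ᴴ = Sᴴ * Sd := by simp [Matrix.conjTranspose_mul]
        _ = S * Sd := by rw [hSH.eq]
        _ = (S * Sd)ᴴ := h3.eq.symm
        _ = Sdᴴ * Sᴴ := by simp [Matrix.conjTranspose_mul]
        _ = Sdᴴ * S := by rw [hSH.eq]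
    exact (mpinv_unique ⟨h1, h2, h3, h4⟩ hMP').symm
  have hE : S * Sd = Sd * S := by
    calc S * Sd = (S * Sd)ᴴ := h3.eq.symm
    _ = Sdᴴ * Sᴴ := by rw [Matrix.conjTranspose_mul]
    _ = Sd * S := by rw [hSdH.eq, hSH.eq]
  -- key: P * (Sd * S) = P, via positivity
  set C : Matrix (Fin n) (Fin n) ℂ := 1 - Sd * S with hC
  have hSC : S * C = 0 := by
    rw [hC, Matrix.mul_sub, Matrix.mul_one, ← Matrix.mul_assoc, h1, sub_self]
  have hCSC : Cᴴ * S * C = 0 := by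
    rw [Matrix.mul_assoc, hSC, Matrix.mul_zero]
  have hPsd : ((P * C)ᴴ * (P * C)).PosSemidef := Matrix.posSemidef_conjTranspose_mul_self _
  have hQsd : ((Q * C)ᴴ * (Q * C)).PosSemidef := Matrix.posSemidef_conjTranspose_mul_self _
  have hsum : (P * C)ᴴ * (P * C) + (Q * C)ᴴ * (Q * C) = 0 := by
    have hPC : (P * C)ᴴ * (P * C) = Cᴴ * P * C := by
      rw [Matrix.conjTranspose_mul, hP.eq]
      calc Cᴴ * P * (P * C) = Cᴴ * (P * P) * C := by simp only [Matrix.mul_assoc]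
      _ = Cᴴ * P * C := by rw [hP2]
    have hQC : (Q * C)ᴴ * (Q * C) = Cᴴ * Q * C := by
      rw [Matrix.conjTranspose_mul, hQ.eq]
      calc Cᴴ * Q * (Q * C) = Cᴴ * (Q * Q) * C := by simp only [Matrix.mul_assoc]
      _ = Cᴴ * Q * C := by rw [hQ2]
    rw [hPC, hQC, ← hCSC, hS, Matrix.mul_add, Matrix.add_mul]
  have hPC0 : P * C = 0 := by
    rw [← Matrix.conjTranspose_mul_self_eq_zero (A := P * C)]
    apply mat_ext_of_mulVec
    intro v
    rw [Matrix.zero_mulVec, ← hPsd.dotProduct_mulVec_zero_iff]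
    have ha' : (0:ℂ) ≤ star v ⬝ᵥ ((P * C)ᴴ * (P * C)) *ᵥ v := hPsd.dotProduct_mulVec_nonneg v
    have hb' : (0:ℂ) ≤ star v ⬝ᵥ ((Q * C)ᴴ * (Q * C)) *ᵥ v := hQsd.dotProduct_mulVec_nonneg v
    have hsum' : star v ⬝ᵥ ((P * C)ᴴ * (P * C)) *ᵥ v
        + star v ⬝ᵥ ((Q * C)ᴴ * (Q * C)) *ᵥ v = 0 := by
      rw [← dotProduct_add, ← Matrix.add_mulVec, hsum, Matrix.zero_mulVec,
        dotProduct_zero]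
    have hle : star v ⬝ᵥ ((P * C)ᴴ * (P * C)) *ᵥ v ≤ 0 := by
      rw [eq_neg_of_add_eq_zero_left hsum']
      exact neg_nonpos.mpr hb'
    exact le_antisymm hle ha'
  have hPE : P * (Sd * S) = P := by
    have h := hPC0
    rw [hC, Matrix.mul_sub, Matrix.mul_one, sub_eq_zero] at h
    exact h.symm
  have hEP : Sd * S * P = P := by
    have h := congrArg Matrix.conjTranspose hPE
    simp only [Matrix.conjTranspose_mul, h4.eq, hP.eq] at h
    exact h
  -- facts about P₀
  have hPP₀ : P * P₀ = P₀ :=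
    herm_idem_mul_eq hP2 (le_trans (le_of_eq hP₀range) inf_le_left)
  have hQP₀ : Q * P₀ = P₀ :=
    herm_idem_mul_eq hQ2 (le_trans (le_of_eq hP₀range) inf_le_right)
  have hEP₀ : Sd * S * P₀ = P₀ := by
    calc Sd * S * P₀ = Sd * S * (P * P₀) := by rw [hPP₀]
    _ = (Sd * S * P) * P₀ := by simp only [Matrix.mul_assoc]
    _ = P * P₀ := by rw [hEP]
    _ = P₀ := hPP₀
  have hSdP₀ : Sd * P₀ = (2:ℂ)⁻¹ • P₀ := by
    have htwo : Sd * P₀ + Sd * P₀ = P₀ := by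
      calc Sd * P₀ + Sd * P₀ = Sd * (P * P₀) + Sd * (Q * P₀) := by rw [hPP₀, hQP₀]
      _ = Sd * S * P₀ := by
            rw [hS]
            simp only [Matrix.mul_add, Matrix.add_mul, Matrix.mul_assoc]
      _ = P₀ := hEP₀
    have h2' : (2:ℂ) • (Sd * P₀) = P₀ := by rw [two_smul]; exact htwo
    calc Sd * P₀ = (2:ℂ)⁻¹ • ((2:ℂ) • (Sd * P₀)) := by
          rw [smul_smul]; norm_num
    _ = (2:ℂ)⁻¹ • P₀ := by rw [h2']
  -- T := P * Sd * Q is Hermitian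
  have hQ' : Q = S - P := by rw [hS, add_sub_cancel_left]
  have hSSdP : S * Sd * P = P := by rw [hE]; exact hEP
  have hQSdP : Q * Sd * P = P - P * Sd * P := by
    calc Q * Sd * P = (S - P) * Sd * P := by rw [← hQ']
    _ = S * Sd * P - P * Sd * P := by rw [Matrix.sub_mul, Matrix.sub_mul]
    _ = P - P * Sd * P := by rw [hSSdP]
  have hPSdQ : P * Sd * Q = P - P * Sd * P := by
    calc P * Sd * Q = P * Sd * (S - P) := by rw [← hQ']
    _ = P * (Sd * S) - P * Sd * P := by
          rw [Matrix.mul_sub, Matrix.mul_assoc]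
    _ = P - P * Sd * P := by rw [hPE]
  have hTH : (P * Sd * Q).IsHermitian := by
    show (P * Sd * Q)ᴴ = P * Sd * Q
    calc (P * Sd * Q)ᴴ = Qᴴ * Sdᴴ * Pᴴ := by
          simp only [Matrix.conjTranspose_mul, Matrix.mul_assoc]
    _ = Q * Sd * P := by rw [hQ.eq, hSdH.eq, hP.eq]
    _ = P * Sd * Q := by rw [hQSdP, hPSdQ]
  -- range of T is inside range of P₀
  have hrange : LinearMap.range (P * Sd * Q).mulVecLin ≤ LinearMap.range P₀.mulVecLin := by
    rw [hP₀range]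
    refine le_inf ?_ ?_
    · rintro x ⟨v, rfl⟩
      refine ⟨(Sd * Q) *ᵥ v, ?_⟩
      simp only [Matrix.mulVecLin_apply, Matrix.mulVec_mulVec, Matrix.mul_assoc]
    · rintro x ⟨v, rfl⟩
      refine ⟨(Sd * P) *ᵥ v, ?_⟩
      simp only [Matrix.mulVecLin_apply, Matrix.mulVec_mulVec, ← Matrix.mul_assoc]
      rw [show Q * Sd * P = P * Sd * Q by rw [hQSdP, hPSdQ]]
  have hP₀T : P₀ * (P * Sd * Q) = P * Sd * Q := herm_idem_mul_eq hP₀2 hrange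
  have hTP₀ : (P * Sd * Q) * P₀ = (2:ℂ)⁻¹ • P₀ := by
    calc P * Sd * Q * P₀ = P * Sd * (Q * P₀) := by rw [Matrix.mul_assoc]
    _ = P * (Sd * P₀) := by rw [hQP₀, Matrix.mul_assoc]
    _ = P * ((2:ℂ)⁻¹ • P₀) := by rw [hSdP₀]
    _ = (2:ℂ)⁻¹ • (P * P₀) := by rw [Matrix.mul_smul]
    _ = (2:ℂ)⁻¹ • P₀ := by rw [hPP₀]
  calc P * Sd * Q = P₀ * (P * Sd * Q) := hP₀T.symm
  _ = ((P * Sd * Q)ᴴ * P₀ᴴ)ᴴ := by simp [Matrix.conjTranspose_mul]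
  _ = ((P * Sd * Q) * P₀)ᴴ := by rw [hTH.eq, hP₀.eq]
  _ = ((2:ℂ)⁻¹ • P₀)ᴴ := by rw [hTP₀]
  _ = (2:ℂ)⁻¹ • P₀ := by rw [Matrix.conjTranspose_smul, hP₀.eq]; norm_num
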